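/- For a Poisson random variable X with mean μ > 0 and positive integers k ≤ q, the derivative with respect to μ of E[X_q(X_q-1)···(X_q-k+1)] equals k·μ^{k-1}·P(X ≤ q-k), where X_q = min(X, q). -/

import Mathlib

open scoped BigOperators

/-- The Poisson probability mass function with real mean parameter `μ`. -/
noncomputable def poissonPMF (μ : ℝ) (n : ℕ) : ℝ := Real.exp (-μ) * μ ^ n / n.factorial

lemma summable_poissonPMF (m : ℝ) : Summable (fun n => poissonPMF m n) := by
  have := (Real.summable_pow_div_factorial m).mul_left (Real.exp (-m))
  simpa [poissonPMF, mul_div_assoc] using this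

lemma tsum_poissonPMF (m : ℝ) : ∑' n : ℕ, poissonPMF m n = 1 := by
  have h : ∑' n : ℕ, (m ^ n / n.factorial : ℝ) = Real.exp m := by
    rw [Real.exp_eq_exp_ℝ, NormedSpace.exp_eq_tsum_div]
  simp only [poissonPMF, mul_div_assoc]
  rw [tsum_mul_left, h, ← Real.exp_add]
  simp

lemma pmf_mul_descFactorial (m : ℝ) (k j : ℕ) :
    poissonPMF m (k + j) * ((k + j).descFactorial k : ℝ) = m ^ k * poissonPMF m j := by
  have hfac : (j.factorial : ℝ) * ((k + j).descFactorial k : ℝ) = ((k + j).factorial : ℝ) := by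
    have := Nat.factorial_mul_descFactorial (n := k + j) (k := k) (Nat.le_add_right k j)
    rw [show k + j - k = j by omega] at this
    exact_mod_cast this
  have h1 : ((k + j).factorial : ℝ) ≠ 0 := Nat.cast_ne_zero.mpr (k + j).factorial_ne_zero
  have h2 : (j.factorial : ℝ) ≠ 0 := Nat.cast_ne_zero.mpr j.factorial_ne_zero
  unfold poissonPMF
  rw [div_mul_eq_mul_div, mul_div_assoc', div_eq_div_iff h1 h2, pow_add]
  linear_combination (Real.exp (-m) * m ^ k * m ^ j) * hfac

lemma moment_eq (q k : ℕ) (hkq : k ≤ q) (m : ℝ) :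
    ∑' n : ℕ, poissonPMF m n * ((min n q).descFactorial k : ℝ)
      = m ^ k * ∑ j ∈ Finset.range (q - k), poissonPMF m j
        + (q.descFactorial k : ℝ)
          * (1 - ∑ n ∈ Finset.range q, poissonPMF m n) := by
  set C : ℝ := (q.descFactorial k : ℝ) with hC
  have hs := summable_poissonPMF m
  have hzero : ∀ n ∉ Finset.range q,
      poissonPMF m n * (((min n q).descFactorial k : ℝ) - C) = 0 := by
    intro n hn
    rw [Finset.mem_range, not_lt] at hn
    rw [min_eq_right hn]
    ring
  have hsum1 : Summable (fun n => poissonPMF m n * (((min n q).descFactorial k : ℝ) - C)) :=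
    summable_of_ne_finset_zero hzero
  have step1 : ∑' n : ℕ, poissonPMF m n * ((min n q).descFactorial k : ℝ)
      = ∑ n ∈ Finset.range q, poissonPMF m n * ((n.descFactorial k : ℝ) - C) + C := by
    have : (fun n : ℕ => poissonPMF m n * ((min n q).descFactorial k : ℝ))
        = fun n => poissonPMF m n * (((min n q).descFactorial k : ℝ) - C)
          + poissonPMF m n * C := by funext n; ring
    rw [this, Summable.tsum_add hsum1 (hs.mul_right C), tsum_eq_sum hzero, tsum_mul_right,
      tsum_poissonPMF]
    rw [one_mul]
    congr 1
    apply Finset.sum_congr rfl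
    intro n hn
    rw [Finset.mem_range] at hn
    rw [min_eq_left hn.le]
  rw [step1]
  have step2 : ∑ n ∈ Finset.range q, poissonPMF m n * ((n.descFactorial k : ℝ))
      = m ^ k * ∑ j ∈ Finset.range (q - k), poissonPMF m j := by
    rw [Finset.range_eq_Ico, ← Finset.sum_Ico_consecutive _ (Nat.zero_le k) hkq]
    have hlow : ∑ n ∈ Finset.Ico 0 k, poissonPMF m n * ((n.descFactorial k : ℝ)) = 0 := by
      apply Finset.sum_eq_zero
      intro n hn
      rw [Finset.mem_Ico] at hn
      rw [Nat.descFactorial_eq_zero_iff_lt.mpr hn.2]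
      simp
    rw [hlow, zero_add, Finset.sum_Ico_eq_sum_range, Finset.mul_sum]
    apply Finset.sum_congr rfl
    intro j _
    exact pmf_mul_descFactorial m k j
  have expand : ∑ n ∈ Finset.range q, poissonPMF m n * ((n.descFactorial k : ℝ) - C)
      = ∑ n ∈ Finset.range q, poissonPMF m n * ((n.descFactorial k : ℝ))
        - C * ∑ n ∈ Finset.range q, poissonPMF m n := by
    rw [Finset.mul_sum, ← Finset.sum_sub_distrib]
    apply Finset.sum_congr rfl
    intro n _
    ring
  rw [expand, step2]
  ring

lemma poissonPMF_hasDerivAt (m : ℝ) (n : ℕ) :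
    HasDerivAt (fun x => poissonPMF x n)
      ((if n = 0 then 0 else poissonPMF m (n - 1)) - poissonPMF m n) m := by
  have h1 : HasDerivAt (fun x : ℝ => Real.exp (-x)) (-Real.exp (-m)) m := by
    simpa using ((hasDerivAt_neg m).exp)
  have h2 : HasDerivAt (fun x : ℝ => x ^ n) (n * m ^ (n - 1)) m := hasDerivAt_pow n m
  have h3 : HasDerivAt (fun x => poissonPMF x n)
      ((-Real.exp (-m) * m ^ n + Real.exp (-m) * (↑n * m ^ (n - 1))) / ↑n.factorial) m :=
    (h1.mul h2).div_const (n.factorial : ℝ)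
  convert h3 using 1
  rcases n with _ | j
  · simp [poissonPMF]
  · simp only [Nat.succ_ne_zero, if_false, poissonPMF, Nat.add_sub_cancel]
    have hf : ((j + 1).factorial : ℝ) = (j + 1) * j.factorial := by
      push_cast [Nat.factorial_succ]; ring
    have hj : (j.factorial : ℝ) ≠ 0 := Nat.cast_ne_zero.mpr j.factorial_ne_zero
    have hj1 : ((j+1).factorial : ℝ) ≠ 0 := Nat.cast_ne_zero.mpr (j+1).factorial_ne_zero
    field_simp [hf]
    rw [hf]; push_cast; ring

lemma sum_poissonPMF_hasDerivAt (m : ℝ) (N : ℕ) :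
    HasDerivAt (fun x => ∑ j ∈ Finset.range N, poissonPMF x j)
      (if N = 0 then 0 else -poissonPMF m (N - 1)) m := by
  induction N with
  | zero => simpa using hasDerivAt_const m (0 : ℝ)
  | succ N ih =>
    have h := ih.add (poissonPMF_hasDerivAt m N)
    simp only [Pi.add_def, ← Finset.sum_range_succ] at h
    refine h.congr_deriv ?_
    symm
    rcases Nat.eq_zero_or_pos N with h0 | h0
    · subst h0; simp
    · have : N ≠ 0 := h0.ne'
      simp only [this, Nat.succ_ne_zero, Nat.add_one_ne_zero, if_false, Nat.add_sub_cancel]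
      ring

/-- For `X ~ Poisson(μ)` with `μ > 0` and positive integers `k ≤ q`, the derivative in `μ`
of the `k`-th falling factorial moment of `X_q = min(X, q)` equals
`k ⬝ μ^(k-1) ⬝ P(X ≤ q - k)`. -/
theorem stmt1 (μ : ℝ) (hμ : 0 < μ) (q k : ℕ) (hk : 1 ≤ k) (hkq : k ≤ q) :
    HasDerivAt (fun m : ℝ => ∑' n : ℕ, poissonPMF m n * ((min n q).descFactorial k : ℝ))
      ((k : ℝ) * μ ^ (k - 1) * ∑ n ∈ Finset.range (q - k + 1), poissonPMF μ n) μ := by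
  obtain ⟨K, rfl⟩ : ∃ K, k = K + 1 := ⟨k - 1, by omega⟩
  obtain ⟨N, rfl⟩ : ∃ N, q = N + (K + 1) := ⟨q - (K + 1), by omega⟩
  set C : ℝ := ((N + (K + 1)).descFactorial (K + 1) : ℝ) with hCdef
  have hfun : (fun m : ℝ => ∑' n : ℕ, poissonPMF m n * ((min n (N + (K + 1))).descFactorial (K + 1) : ℝ))
      = fun m => m ^ (K + 1) * ∑ j ∈ Finset.range N, poissonPMF m j
        + C * (1 - ∑ n ∈ Finset.range (N + (K + 1)), poissonPMF m n) := by
    funext m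
    rw [moment_eq _ _ hkq m]
    rw [show N + (K + 1) - (K + 1) = N by omega]
  rw [hfun]
  have hd1 := (hasDerivAt_pow (K + 1) μ).mul (sum_poissonPMF_hasDerivAt μ N)
  have hd2 := ((hasDerivAt_const μ (1 : ℝ)).sub
    (sum_poissonPMF_hasDerivAt μ (N + (K + 1)))).const_mul C
  have hd := hd1.add hd2
  refine hd.congr_deriv ?_
  symm
  rw [show N + (K + 1) - (K + 1) + 1 = N + 1 by omega, Finset.sum_range_succ]
  rw [if_neg (by omega : ¬ N + (K + 1) = 0)]
  rw [show N + (K + 1) - 1 = N + K by omega]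
  simp only [Nat.add_sub_cancel]
  rcases N with _ | M
  · -- q = K + 1
    simp only [Finset.range_zero, Finset.sum_empty, zero_add, mul_zero, add_zero,
      if_pos rfl, Nat.zero_add]
    have hC : C = ((K + 1).factorial : ℝ) := by
      rw [hCdef, Nat.zero_add, Nat.descFactorial_self]
    have hf : ((K + 1).factorial : ℝ) = (K + 1) * (K.factorial : ℝ) := by
      push_cast [Nat.factorial_succ]; ring
    unfold poissonPMF
    rw [hC, hf]
    have h0 : (K.factorial : ℝ) ≠ 0 := Nat.cast_ne_zero.mpr K.factorial_ne_zero
    field_simp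
    simp only [if_true]; push_cast; ring
  · -- q = M + 1 + (K + 1)
    rw [if_neg (by omega : ¬ M + 1 = 0)]
    rw [show M + 1 - 1 = M by rfl, show M + 1 + K = M + K + 1 by omega]
    have hC : ((M + 1).factorial : ℝ) * C = ((M + K + 2).factorial : ℝ) := by
      have h := Nat.factorial_mul_descFactorial (n := M + K + 2) (k := K + 1) (by omega)
      rw [show M + K + 2 - (K + 1) = M + 1 by omega] at h
      rw [hCdef, show M + 1 + (K + 1) = M + K + 2 by omega]
      exact_mod_cast h
    have hf1 : ((M + 1).factorial : ℝ) = (M + 1) * (M.factorial : ℝ) := by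
      push_cast [Nat.factorial_succ]; ring
    have hf2 : ((M + K + 2).factorial : ℝ) = (M + K + 2) * ((M + K + 1).factorial : ℝ) := by
      push_cast [Nat.factorial_succ]; ring
    unfold poissonPMF
    have h0 : (M.factorial : ℝ) ≠ 0 := Nat.cast_ne_zero.mpr M.factorial_ne_zero
    have h1 : ((M + 1).factorial : ℝ) ≠ 0 := Nat.cast_ne_zero.mpr (M + 1).factorial_ne_zero
    have h2 : ((M + K + 1).factorial : ℝ) ≠ 0 := Nat.cast_ne_zero.mpr (M + K + 1).factorial_ne_zero
    field_simp
    push_cast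
    linear_combination (-(Real.exp (-μ) * μ ^ (M + K + 1) * (M.factorial : ℝ))) * (hC + hf2)
      + (Real.exp (-μ) * μ ^ (M + K + 1) * ((M + K + 1).factorial : ℝ)) * hf1
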